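/- Let X_1, ..., X_n be negatively associated random variables each taking values in {0,1}, and let Y = X_1 + ... + X_n. Then for any ε ≥ 0, P(Y > (1+ε)E[Y]) ≤ exp(-ε² E[Y] / (2+ε)). -/

import Mathlib

open MeasureTheory in
/-- Random variables `X i` are negatively associated under `μ`: for any disjoint index sets
`I, J` and any two concordant monotone functions `f, g`,
`E[f(X_I) g(X_J)] ≤ E[f(X_I)] E[g(X_J)]`. -/
def NegAssoc {Ω ι : Type*} [MeasurableSpace Ω] (μ : Measure Ω) (X : ι → Ω → ℝ) : Prop :=
  ∀ (I J : Finset ι), Disjoint I J →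
    ∀ (f : (↥I → ℝ) → ℝ) (g : (↥J → ℝ) → ℝ),
      ((Monotone f ∧ Monotone g) ∨ (Antitone f ∧ Antitone g)) →
      (∫ ω, f (fun i => X i.1 ω) * g (fun j => X j.1 ω) ∂μ) ≤
        (∫ ω, f (fun i => X i.1 ω) ∂μ) * (∫ ω, g (fun j => X j.1 ω) ∂μ)

open MeasureTheory

lemma key_deriv {y : ℝ} (h1y : (0:ℝ) < 1 + y) :
    HasDerivAt (fun y => (2 + y) * Real.log (1 + y) - 2 * y)
      (1 * Real.log (1 + y) + (2 + y) * (1 / (1 + y)) - 2) y := by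
  have hlog : HasDerivAt (fun y : ℝ => Real.log (1 + y)) (1 / (1 + y)) y := by
    have := (Real.hasDerivAt_log h1y.ne').comp y ((hasDerivAt_id y).const_add 1)
    simpa [Function.comp_def] using this
  have h1 : HasDerivAt (fun y : ℝ => 2 + y) 1 y := (hasDerivAt_id y).const_add 2
  have h := (h1.mul hlog).sub ((hasDerivAt_id y).const_mul 2)
  simp only [mul_one] at h
  exact h

lemma key_log {x : ℝ} (hx : 0 ≤ x) : 2 * x / (2 + x) ≤ Real.log (1 + x) := by
  have h2x : (0:ℝ) < 2 + x := by linarith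
  have key : 2 * x ≤ (2 + x) * Real.log (1 + x) := by
    have hmono : MonotoneOn (fun y => (2 + y) * Real.log (1 + y) - 2 * y) (Set.Ici 0) := by
      apply monotoneOn_of_deriv_nonneg (convex_Ici 0)
      · apply ContinuousOn.sub
        · apply ContinuousOn.mul (by fun_prop)
          apply Real.continuousOn_log.comp (by fun_prop)
          intro y hy
          simp only [Set.mem_Ici] at hy
          simp only [Set.mem_compl_iff, Set.mem_singleton_iff]
          intro h; linarith
        · fun_prop
      · intro y hy
        rw [interior_Ici] at hy
        have h1y : (0:ℝ) < 1 + y := by linarith [Set.mem_Ioi.mp hy]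
        exact (key_deriv h1y).differentiableAt.differentiableWithinAt
      · intro y hy
        rw [interior_Ici] at hy
        have h1y : (0:ℝ) < 1 + y := by linarith [Set.mem_Ioi.mp hy]
        rw [(key_deriv h1y).deriv]
        have hlow : 1 - (1 + y)⁻¹ ≤ Real.log (1 + y) := Real.one_sub_inv_le_log_of_pos h1y
        have : (2 + y) * (1 / (1 + y)) = 1 + (1 + y)⁻¹ := by field_simp; ring
        rw [this]
        linarith
    have := hmono (Set.self_mem_Ici) (Set.mem_Ici.mpr hx) hx
    simpa using this
  rw [div_le_iff₀ h2x]
  linarith [key]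


/-- Chernoff upper-tail bound for sums of negatively associated {0,1}-valued
random variables: `P(Y > (1+ε)E[Y]) ≤ exp(-ε² E[Y]/(2+ε))`. -/
theorem chernoff_upper_tail_NA {Ω : Type*} [MeasurableSpace Ω] (μ : Measure Ω)
    [IsProbabilityMeasure μ] {n : ℕ} (X : Fin n → Ω → ℝ)
    (hmeas : ∀ i, Measurable (X i))
    (h01 : ∀ i ω, X i ω = 0 ∨ X i ω = 1)
    (hNA : NegAssoc μ X)
    (ε : ℝ) (hε : 0 ≤ ε) :
    (μ {ω | (1 + ε) * (∫ ω', ∑ i, X i ω' ∂μ) < ∑ i, X i ω}).toReal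
      ≤ Real.exp (-(ε ^ 2 * (∫ ω', ∑ i, X i ω' ∂μ)) / (2 + ε)) := by
  classical
  have hXnn : ∀ i ω, 0 ≤ X i ω := fun i ω => by rcases h01 i ω with h | h <;> simp [h]
  have hXle : ∀ i ω, X i ω ≤ 1 := fun i ω => by rcases h01 i ω with h | h <;> simp [h]
  have hXint : ∀ i, Integrable (X i) μ := fun i =>
    ⟨(hmeas i).aestronglyMeasurable,
      HasFiniteIntegral.of_bounded (C := 1) (ae_of_all _ fun ω => by
        rw [Real.norm_eq_abs, abs_of_nonneg (hXnn i ω)]; exact hXle i ω)⟩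
  set t := Real.log (1 + ε) with ht_def
  have h1ε : (0:ℝ) < 1 + ε := by linarith
  have ht : 0 ≤ t := Real.log_nonneg (by linarith)
  have het : Real.exp t = 1 + ε := Real.exp_log h1ε
  set m := ∫ ω', ∑ i, X i ω' ∂μ with hm
  have hmnn : 0 ≤ m := integral_nonneg fun ω => Finset.sum_nonneg fun i _ => hXnn i ω
  -- per-variable mgf
  have hident : ∀ i ω, Real.exp (t * X i ω) = 1 + (Real.exp t - 1) * X i ω := by
    intro i ω; rcases h01 i ω with h | h <;> simp [h]
  have hXi_exp : ∀ i, (∫ ω, Real.exp (t * X i ω) ∂μ)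
      = 1 + (Real.exp t - 1) * (∫ ω, X i ω ∂μ) := by
    intro i
    simp_rw [hident i]
    rw [integral_add (integrable_const 1) ((hXint i).const_mul _), integral_const,
      integral_const_mul]
    simp
  have hXi_le : ∀ i, (∫ ω, Real.exp (t * X i ω) ∂μ)
      ≤ Real.exp ((Real.exp t - 1) * (∫ ω, X i ω ∂μ)) := by
    intro i; rw [hXi_exp i, add_comm]; exact Real.add_one_le_exp _
  -- NA product bound
  have hprod : ∀ S : Finset (Fin n), (∫ ω, Real.exp (t * ∑ i ∈ S, X i ω) ∂μ)
      ≤ ∏ i ∈ S, ∫ ω, Real.exp (t * X i ω) ∂μ := by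
    intro S
    induction S using Finset.induction_on with
    | empty => simp
    | @insert a s ha ih =>
      have hdisj : Disjoint ({a} : Finset (Fin n)) s := Finset.disjoint_singleton_left.mpr ha
      have hf : Monotone (fun v : (↥({a} : Finset (Fin n)) → ℝ) =>
          Real.exp (t * v ⟨a, Finset.mem_singleton_self a⟩)) := fun v w hvw =>
        Real.exp_le_exp.mpr (mul_le_mul_of_nonneg_left (hvw _) ht)
      have hg : Monotone (fun v : (↥s → ℝ) => Real.exp (t * ∑ j, v j)) := fun v w hvw =>
        Real.exp_le_exp.mpr (mul_le_mul_of_nonneg_left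
          (Finset.sum_le_sum fun j _ => hvw j) ht)
      have hNA' := hNA {a} s hdisj _ _ (Or.inl ⟨hf, hg⟩)
      have hs : ∀ ω, (∑ x : {x // x ∈ s}, X (↑x) ω) = ∑ i ∈ s, X i ω := fun ω =>
        Finset.sum_coe_sort s (fun i => X i ω)
      simp_rw [hs] at hNA'
      rw [Finset.prod_insert ha]
      simp only [Finset.sum_insert ha]
      simp_rw [mul_add, Real.exp_add]
      calc (∫ ω, Real.exp (t * X a ω) * Real.exp (t * ∑ i ∈ s, X i ω) ∂μ)
          ≤ (∫ ω, Real.exp (t * X a ω) ∂μ) * (∫ ω, Real.exp (t * ∑ i ∈ s, X i ω) ∂μ) := hNA'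
        _ ≤ (∫ ω, Real.exp (t * X a ω) ∂μ) * ∏ i ∈ s, ∫ ω, Real.exp (t * X i ω) ∂μ := by
            apply mul_le_mul_of_nonneg_left ih
            exact integral_nonneg fun ω => (Real.exp_pos _).le
  -- mgf bound
  have hmsum : m = ∑ i, ∫ ω, X i ω ∂μ := integral_finset_sum _ (fun i _ => hXint i)
  have hmgf : (∫ ω, Real.exp (t * ∑ i, X i ω) ∂μ) ≤ Real.exp ((Real.exp t - 1) * m) := by
    calc (∫ ω, Real.exp (t * ∑ i, X i ω) ∂μ)
        ≤ ∏ i, ∫ ω, Real.exp (t * X i ω) ∂μ := hprod Finset.univ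
      _ ≤ ∏ i, Real.exp ((Real.exp t - 1) * (∫ ω, X i ω ∂μ)) := by
          apply Finset.prod_le_prod
          · exact fun i _ => integral_nonneg fun ω => (Real.exp_pos _).le
          · exact fun i _ => hXi_le i
      _ = Real.exp ((Real.exp t - 1) * m) := by
          rw [← Real.exp_sum, hmsum, Finset.mul_sum]
  -- integrability of exp(t * Y)
  have hYmeas : Measurable (fun ω => ∑ i, X i ω) := Finset.measurable_sum _ (fun i _ => hmeas i)
  have hYle : ∀ ω, (∑ i, X i ω) ≤ n := fun ω => by
    calc (∑ i, X i ω) ≤ ∑ _i : Fin n, (1:ℝ) := Finset.sum_le_sum fun i _ => hXle i ω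
      _ = n := by simp
  have hIntExp : Integrable (fun ω => Real.exp (t * ∑ i, X i ω)) μ :=
    ⟨(Real.measurable_exp.comp (measurable_const.mul hYmeas)).aestronglyMeasurable,
      HasFiniteIntegral.of_bounded (C := Real.exp (t * n)) (ae_of_all _ fun ω => by
        rw [Real.norm_eq_abs, abs_of_nonneg (Real.exp_pos _).le]
        exact Real.exp_le_exp.mpr (mul_le_mul_of_nonneg_left (hYle ω) ht))⟩
  -- Markov / Chernoff
  have hmarkov := ProbabilityTheory.measure_ge_le_exp_mul_mgf (μ := μ)
    (X := fun ω => ∑ i, X i ω) ((1 + ε) * m) ht hIntExp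
  rw [ProbabilityTheory.mgf] at hmarkov
  have hsubset : {ω | (1 + ε) * m < ∑ i, X i ω} ⊆ {ω | (1 + ε) * m ≤ ∑ i, X i ω} :=
    Set.setOf_subset_setOf.mpr fun ω h => h.le
  have hmono : (μ {ω | (1 + ε) * m < ∑ i, X i ω}).toReal
      ≤ (μ {ω | (1 + ε) * m ≤ ∑ i, X i ω}).toReal :=
    ENNReal.toReal_mono (measure_ne_top _ _) (measure_mono hsubset)
  -- final arithmetic
  have h2ε : (0:ℝ) < 2 + ε := by linarith
  have hkey : 2 * ε / (2 + ε) ≤ t := key_log hε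
  have h1 : ε - t * (1 + ε) ≤ -(ε ^ 2) / (2 + ε) := by
    have hmul : (1 + ε) * (2 * ε / (2 + ε)) ≤ (1 + ε) * t :=
      mul_le_mul_of_nonneg_left hkey (by linarith)
    have heq : ε - (1 + ε) * (2 * ε / (2 + ε)) = -(ε ^ 2) / (2 + ε) := by
      field_simp; ring
    linarith
  calc (μ {ω | (1 + ε) * m < ∑ i, X i ω}).toReal
      ≤ (μ {ω | (1 + ε) * m ≤ ∑ i, X i ω}).toReal := hmono
    _ ≤ Real.exp (-t * ((1 + ε) * m)) * (∫ ω, Real.exp (t * ∑ i, X i ω) ∂μ) := hmarkov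
    _ ≤ Real.exp (-t * ((1 + ε) * m)) * Real.exp ((Real.exp t - 1) * m) :=
        mul_le_mul_of_nonneg_left hmgf (Real.exp_pos _).le
    _ = Real.exp ((Real.exp t - 1) * m - t * ((1 + ε) * m)) := by
        rw [← Real.exp_add]; ring_nf
    _ ≤ Real.exp (-(ε ^ 2 * m) / (2 + ε)) := by
        apply Real.exp_le_exp.mpr
        rw [het]
        calc (1 + ε - 1) * m - t * ((1 + ε) * m) = (ε - t * (1 + ε)) * m := by ring
          _ ≤ (-(ε ^ 2) / (2 + ε)) * m := mul_le_mul_of_nonneg_right h1 hmnn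
          _ = -(ε ^ 2 * m) / (2 + ε) := by ring
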